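/- Any solution z ∈ (0,1) of the final-size equation 1 − z = p·exp(−δτz) + (1−p)·exp(−τz), with p ∈ (0,1), δ ∈ (0,1), τ > 0, satisfies R_e > −ln(1−z)/z, where R_e = τ(pδ + 1 − p). Equivalently, the pair (z, R_e) always lies strictly above the curve R_e = −ln(1−z)/z. -/
import Mathlib


theorem stmt_9 (p δ τ z : ℝ) (hp : p ∈ Set.Ioo (0:ℝ) 1) (hδ : δ ∈ Set.Ioo (0:ℝ) 1)
    (hτ : 0 < τ) (hz : z ∈ Set.Ioo (0:ℝ) 1)
    (hsol : 1 - z = p * Real.exp (-(δ * τ * z)) + (1 - p) * Real.exp (-(τ * z))) :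
    -Real.log (1 - z) / z < τ * (p * δ + 1 - p) := by
  obtain ⟨hp0, hp1⟩ := hp
  obtain ⟨hδ0, hδ1⟩ := hδ
  obtain ⟨hz0, hz1⟩ := hz
  have hne : (-(δ * τ * z)) ≠ (-(τ * z)) := by
    have : δ * τ * z ≠ τ * z := by nlinarith [mul_pos hτ hz0]
    simpa using this
  have hconv := strictConvexOn_exp.2 (Set.mem_univ (-(δ * τ * z)))
    (Set.mem_univ (-(τ * z))) hne hp0 (sub_pos.mpr hp1) (by ring)
  simp only [smul_eq_mul] at hconv
  have hkey : Real.exp (-(τ * (p * δ + 1 - p) * z)) < 1 - z := by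
    rw [hsol]
    calc Real.exp (-(τ * (p * δ + 1 - p) * z))
        = Real.exp (p * -(δ * τ * z) + (1 - p) * -(τ * z)) := by ring_nf
      _ < _ := hconv
  have h1z : 0 < 1 - z := by linarith
  have hlog : -(τ * (p * δ + 1 - p) * z) < Real.log (1 - z) := by
    have := Real.log_lt_log (Real.exp_pos _) hkey
    rwa [Real.log_exp] at this
  rw [div_lt_iff₀ hz0]
  linarith
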